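/- arXiv:2206.01874 — 7 statements merged into one kernel-verified Lean document; each statement's English description precedes it below -/
import Mathlib

section
/- Every connected finite simple graph with 2K vertices (K ≥ 1) admits a partition of its vertex set into K pairs such that the two vertices of each pair are at graph distance at most 2 from each other. -/
open SimpleGraph Function

private lemma reach_induce_aux {W : Type} {H : SimpleGraph W} {s : Set W} :
    ∀ {a b : W} (p : H.Walk a b), (∀ x ∈ p.support, x ∈ s) →
      ∀ (ha : a ∈ s) (hb : b ∈ s), (H.induce s).Reachable ⟨a, ha⟩ ⟨b, hb⟩ := by
  intro a b p
  induction p with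
  | nil => intro _ ha hb; rfl
  | @cons a c b hadj q ih =>
      intro hsup ha hb
      have hc : c ∈ s := hsup c (by simp [Walk.support_cons])
      have h1 : (H.induce s).Adj ⟨a, ha⟩ ⟨c, hc⟩ := hadj
      exact (Adj.reachable h1).trans
        (ih (fun x hx => hsup x (by simp [Walk.support_cons, hx])) hc hb)

private lemma dist_add_dist_le_length {W : Type} [DecidableEq W] {H : SimpleGraph W} {r x y : W}
    (p : H.Walk r x) (hy : y ∈ p.support) :
    H.dist r y + H.dist y x ≤ p.length := by
  have hspec := p.take_spec hy
  have : (p.takeUntil y hy).length + (p.dropUntil y hy).length = p.length := by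
    rw [← Walk.length_append, hspec]
  calc H.dist r y + H.dist y x
      ≤ (p.takeUntil y hy).length + (p.dropUntil y hy).length :=
        Nat.add_le_add (dist_le _) (dist_le _)
    _ = p.length := this

private lemma conn_aux {W : Type} {H : SimpleGraph W} {u w r : W}
    (hru : r ≠ u) (hrw : r ≠ w)
    (havoid : ∀ x, x ≠ u → x ≠ w → ∃ q : H.Walk r x, ∀ y ∈ q.support, y ≠ u ∧ y ≠ w) :
    (H.induce ({u, w}ᶜ : Set W)).Connected := by
  have hmem : ∀ x : W, x ∈ ({u, w}ᶜ : Set W) ↔ x ≠ u ∧ x ≠ w := by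
    intro x; simp [Set.mem_compl_iff, not_or]
  have hr : r ∈ ({u, w}ᶜ : Set W) := (hmem r).2 ⟨hru, hrw⟩
  rw [connected_iff]
  refine ⟨?_, ⟨⟨r, hr⟩⟩⟩
  · rintro ⟨a, ha⟩ ⟨b, hb⟩
    have hreach : ∀ (x : W) (hx : x ∈ ({u, w}ᶜ : Set W)),
        (H.induce ({u, w}ᶜ : Set W)).Reachable ⟨r, hr⟩ ⟨x, hx⟩ := by
      intro x hx
      obtain ⟨hxu, hxw⟩ := (hmem x).1 hx
      obtain ⟨q, hq⟩ := havoid x hxu hxw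
      exact reach_induce_aux q (fun y hy => (hmem y).2 (hq y hy)) hr hx
    exact (hreach a ha).symm.trans (hreach b hb)

private lemma cut_pair {W : Type} [Fintype W] {H : SimpleGraph W} (hconn : H.Connected)
    (hcard : 2 ≤ Fintype.card W) :
    ∃ u w : W, u ≠ w ∧ H.dist u w ≤ 2 ∧
      ((∀ x : W, x = u ∨ x = w) ∨ (H.induce ({u, w}ᶜ : Set W)).Connected) := by
  classical
  have hne : Nonempty W := Fintype.card_pos_iff.mp (by omega)
  obtain ⟨r⟩ := hne
  obtain ⟨u, -, hmax⟩ := Finset.exists_max_image Finset.univ (H.dist r) ⟨r, Finset.mem_univ r⟩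
  have hmax : ∀ y : W, H.dist r y ≤ H.dist r u := fun y => hmax y (Finset.mem_univ y)
  set d := H.dist r u with hd
  -- d ≥ 1
  obtain ⟨v, hvr⟩ := Fintype.exists_ne_of_one_lt_card (by omega) r
  have hd1 : 1 ≤ d := le_trans (hconn.pos_dist_of_ne (Ne.symm hvr)) (hmax v)
  have hur : u ≠ r := by
    intro h; rw [h] at hd; simp [SimpleGraph.dist_self] at hd; omega
  -- find p adjacent to u with dist r p = d - 1
  obtain ⟨q0, hq0⟩ := hconn.exists_walk_length_eq_dist r u
  rw [← hd] at hq0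
  obtain ⟨p, hup, q1, hq1⟩ : ∃ (p : W) (h : H.Adj u p) (q1 : H.Walk p r),
      q1.length + 1 = d := by
    have hlen : q0.reverse.length = d := by rw [Walk.length_reverse, hq0]
    cases hrev : q0.reverse with
    | nil =>
        exfalso
        rw [hrev] at hlen
        simp at hlen; omega
    | cons hadj q1 =>
        refine ⟨_, hadj, q1, ?_⟩
        rw [hrev] at hlen
        simpa [Walk.length_cons] using hlen
  have hdpu : H.dist p u = 1 := dist_eq_one_iff_adj.mpr hup.symm
  have hrp : H.dist r p = d - 1 := by
    have h1 : H.dist r p ≤ d - 1 := by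
      have := dist_le q1.reverse
      rwa [Walk.length_reverse, show q1.length = d - 1 by omega] at this
    have h2 : d ≤ H.dist r p + 1 := by
      calc d = H.dist r u := hd
        _ ≤ H.dist r p + H.dist p u := hconn.dist_triangle
        _ = H.dist r p + 1 := by rw [hdpu]
    omega
  have hpu : p ≠ u := hup.ne'
  by_cases hA : ∃ w, w ≠ u ∧ H.dist r w = d ∧ H.Adj p w
  · -- Case A: pair u with sibling w
    obtain ⟨w, hwu, hdw, hpw⟩ := hA
    refine ⟨u, w, Ne.symm hwu, ?_, Or.inr ?_⟩
    · calc H.dist u w ≤ H.dist u p + H.dist p w := hconn.dist_triangle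
        _ ≤ 1 + 1 := Nat.add_le_add (by rw [dist_eq_one_iff_adj.mpr hup])
            (by rw [dist_eq_one_iff_adj.mpr hpw])
        _ = 2 := rfl
    · have hrw : r ≠ w := by
        intro h; rw [← h, SimpleGraph.dist_self] at hdw; omega
      refine conn_aux (Ne.symm hur) hrw ?_
      intro x hxu hxw
      obtain ⟨q, hq⟩ := hconn.exists_walk_length_eq_dist r x
      refine ⟨q, fun y hy => ?_⟩
      have hkey := dist_add_dist_le_length q hy
      rw [hq] at hkey
      constructor
      · rintro rfl
        have : H.dist y x = 0 := by have := hmax x; omega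
        exact hxu (hconn.dist_eq_zero_iff.mp this).symm
      · rintro rfl
        have : H.dist y x = 0 := by
          have := hmax x; rw [hdw] at hkey; omega
        exact hxw (hconn.dist_eq_zero_iff.mp this).symm
  · -- Case B: pair u with parent p
    refine ⟨u, p, Ne.symm hpu, by
      rw [SimpleGraph.dist_comm, hdpu]; omega, ?_⟩
    by_cases hsmall : ∀ x : W, x = u ∨ x = p
    · exact Or.inl hsmall
    · push_neg at hsmall
      obtain ⟨x₀, hx₀u, hx₀p⟩ := hsmall
      -- first: d ≥ 2
      have hd2 : 2 ≤ d := by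
        by_contra hlt
        have hd' : d = 1 := by omega
        have hpr : p = r := by
          have : H.dist r p = 0 := by omega
          exact (hconn.dist_eq_zero_iff.mp this).symm
        apply hA
        refine ⟨x₀, hx₀u, ?_, ?_⟩
        · have h1 : 1 ≤ H.dist r x₀ := hconn.pos_dist_of_ne (by rw [← hpr]; exact Ne.symm hx₀p)
          have h2 := hmax x₀; omega
        · rw [hpr]
          apply dist_eq_one_iff_adj.mp
          have h1 : 1 ≤ H.dist r x₀ := hconn.pos_dist_of_ne (by rw [← hpr]; exact Ne.symm hx₀p)
          have h2 := hmax x₀; omega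
      have hrp' : r ≠ p := by
        intro h
        rw [← h, SimpleGraph.dist_self] at hrp; omega
      refine Or.inr (conn_aux (Ne.symm hur) hrp' ?_)
      intro x hxu hxp
      obtain ⟨q, hq⟩ := hconn.exists_walk_length_eq_dist r x
      refine ⟨q, fun y hy => ?_⟩
      have hkey := dist_add_dist_le_length q hy
      rw [hq] at hkey
      constructor
      · rintro rfl
        have : H.dist y x = 0 := by have := hmax x; omega
        exact hxu (hconn.dist_eq_zero_iff.mp this).symm
      · rintro rfl
        -- y = p on a shortest walk to x: contradiction with ¬hA
        exfalso
        have hmx := hmax x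
        have hyx : H.dist y x = 1 := by
          have h0 : H.dist y x ≠ 0 := fun h =>
            hxp (hconn.dist_eq_zero_iff.mp h).symm
          rw [hrp] at hkey; omega
        apply hA
        refine ⟨x, hxu, by rw [hrp] at hkey; have h1 := hconn.dist_triangle (u := r) (v := y) (w := x); rw [hrp, hyx] at h1; omega, dist_eq_one_iff_adj.mp hyx⟩

private lemma dist_induce_le {V : Type} {G : SimpleGraph V} {s : Set V} {a b : ↥s}
    (h : (G.induce s).Reachable a b) : G.dist ↑a ↑b ≤ (G.induce s).dist a b := by
  obtain ⟨p, hp⟩ := h.exists_walk_length_eq_dist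
  have := dist_le (p.map (SimpleGraph.Embedding.induce s).toHom)
  rwa [Walk.length_map, hp] at this

private lemma pair_up {V : Type} [Fintype V] (G : SimpleGraph V) :
    ∀ (n : ℕ) (s : Set V), s.ncard = n → Even n → (G.induce s).Connected →
      ∃ f : V → V, (∀ v ∉ s, f v = v) ∧
        ∀ v ∈ s, f v ∈ s ∧ f (f v) = v ∧ f v ≠ v ∧ G.dist v (f v) ≤ 2 := by
  intro n
  induction n using Nat.strong_induction_on with
  | _ n ih =>
    intro s hcard heven hconn
    classical
    haveI : Fintype ↥s := s.toFinite.fintype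
    have hcards : Fintype.card ↥s = n := by
      calc Fintype.card ↥s = Nat.card ↥s := Nat.card_eq_fintype_card.symm
        _ = s.ncard := Nat.card_coe_set_eq s
        _ = n := hcard
    have hsne : s.Nonempty := by
      obtain ⟨⟨x, hx⟩⟩ := hconn.nonempty
      exact ⟨x, hx⟩
    have hnpos : 0 < n := by
      rw [← hcard]
      exact (Set.ncard_pos s.toFinite).mpr hsne
    obtain ⟨k, hk⟩ := heven
    have hn2 : 2 ≤ n := by omega
    obtain ⟨u, w, huw, hdist2, hdisj⟩ := cut_pair hconn (by omega)
    have hvalne : (↑u : V) ≠ ↑w := fun h => huw (Subtype.ext h)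
    have hGdist : G.dist (↑u : V) ↑w ≤ 2 :=
      le_trans (dist_induce_le (hconn.preconnected u w)) hdist2
    rcases hdisj with hall | hconn'
    · -- s has exactly the two elements u, w
      refine ⟨fun v => if v = ↑u then ↑w else if v = ↑w then ↑u else v, ?_, ?_⟩
      · intro v hv
        have h1 : v ≠ ↑u := fun h => hv (h ▸ u.2)
        have h2 : v ≠ ↑w := fun h => hv (h ▸ w.2)
        simp [h1, h2]
      · intro v hv
        have hGdist' : G.dist (↑w : V) ↑u ≤ 2 := by
          rw [SimpleGraph.dist_comm]; exact hGdist
        rcases hall ⟨v, hv⟩ with h | h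
        · have hvu : v = ↑u := congrArg Subtype.val h
          subst hvu
          refine ⟨?_, ?_, ?_, ?_⟩
          · simpa [hvalne.symm] using w.2
          · simp [hvalne, hvalne.symm]
          · simpa [hvalne.symm] using hvalne.symm
          · simpa [hvalne.symm] using hGdist
        · have hvw : v = ↑w := congrArg Subtype.val h
          subst hvw
          refine ⟨?_, ?_, ?_, ?_⟩
          · simpa [hvalne.symm] using u.2
          · simp [hvalne, hvalne.symm]
          · simpa [hvalne.symm] using hvalne
          · simpa [hvalne.symm] using hGdist'
    · -- recurse on s \ {u, w}
      set s' : Set V := s \ {↑u, ↑w} with hs'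
      have hmemc : ∀ x : ↥s, x ∈ ({u, w}ᶜ : Set ↥s) ↔ x ≠ u ∧ x ≠ w := by
        intro x; simp [not_or]
      have iso : ((G.induce s).induce ({u, w}ᶜ : Set ↥s)) ≃g G.induce s' :=
        { toFun := fun x => ⟨x.1.1, x.1.2, by
            have hx := (hmemc x.1).1 x.2
            simp only [Set.mem_insert_iff, Set.mem_singleton_iff, not_or]
            exact ⟨fun h => hx.1 (Subtype.ext h), fun h => hx.2 (Subtype.ext h)⟩⟩,
          invFun := fun y => ⟨⟨y.1, y.2.1⟩, (hmemc _).2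
            ⟨fun h => y.2.2 (by rw [congrArg Subtype.val h]; exact Set.mem_insert _ _),
             fun h => y.2.2 (by rw [congrArg Subtype.val h]; exact
               Set.mem_insert_of_mem _ rfl)⟩⟩,
          left_inv := fun x => rfl,
          right_inv := fun y => rfl,
          map_rel_iff' := Iff.rfl }
      have hconn'' : (G.induce s').Connected := iso.connected_iff.mp hconn'
      have hsub : ({↑u, ↑w} : Set V) ⊆ s := by
        intro x hx
        rcases hx with rfl | hx
        · exact u.2
        · rw [Set.mem_singleton_iff] at hx; subst hx; exact w.2
      have hcard' : s'.ncard = n - 2 := by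
        rw [hs', Set.ncard_diff hsub, Set.ncard_pair hvalne, hcard]
      obtain ⟨f', hf0', hf'⟩ := ih (n - 2) (by omega) s' hcard' ⟨k - 1, by omega⟩ hconn''
      have husn : (↑u : V) ∉ s' := fun h => h.2 (Set.mem_insert _ _)
      have hwsn : (↑w : V) ∉ s' := fun h => h.2 (Set.mem_insert_of_mem _ rfl)
      refine ⟨fun v => if v = ↑u then ↑w else if v = ↑w then ↑u else f' v, ?_, ?_⟩
      · intro v hv
        have h1 : v ≠ ↑u := fun h => hv (h ▸ u.2)
        have h2 : v ≠ ↑w := fun h => hv (h ▸ w.2)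
        have h3 : v ∉ s' := fun h => hv h.1
        simp [h1, h2, hf0' v h3]
      · intro v hv
        have hGdist' : G.dist (↑w : V) ↑u ≤ 2 := by
          rw [SimpleGraph.dist_comm]; exact hGdist
        by_cases h1 : v = ↑u
        · subst h1
          refine ⟨?_, ?_, ?_, ?_⟩
          · simpa [hvalne.symm] using w.2
          · simp [hvalne, hvalne.symm]
          · simpa [hvalne.symm] using hvalne.symm
          · simpa [hvalne.symm] using hGdist
        · by_cases h2 : v = ↑w
          · subst h2
            refine ⟨?_, ?_, ?_, ?_⟩
            · simpa [hvalne.symm] using u.2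
            · simp [hvalne, hvalne.symm]
            · simpa [hvalne.symm] using hvalne
            · simpa [hvalne.symm] using hGdist'
          · have hvs' : v ∈ s' := ⟨hv, by simp [h1, h2]⟩
            obtain ⟨hm, hinv, hne, hd⟩ := hf' v hvs'
            have hfu : f' v ≠ ↑u := fun h => husn (h ▸ hm)
            have hfw : f' v ≠ ↑w := fun h => hwsn (h ▸ hm)
            simp only [if_neg h1, if_neg h2, if_neg hfu, if_neg hfw]
            exact ⟨hm.1, hinv, hne, hd⟩

/-- Every connected graph with `2K` vertices (`K ≥ 1`) admits a partition of its vertex set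
into `K` pairs, each pair at graph distance at most 2 (encoded by a fixed-point-free
involution). -/
theorem perfect_dist_le_two_pairing_even {V : Type} [Fintype V] (G : SimpleGraph V)
    (K : ℕ) (hK : 1 ≤ K) (hcard : Fintype.card V = 2 * K) (hc : G.Connected) :
    ∃ f : V → V, Function.Involutive f ∧ ∀ v, f v ≠ v ∧ G.dist v (f v) ≤ 2 := by
  obtain ⟨f, -, hf⟩ := pair_up G (2 * K) Set.univ
    (by rw [Set.ncard_univ, Nat.card_eq_fintype_card, hcard]) ⟨K, two_mul K⟩
    ((induceUnivIso G).connected_iff.mpr hc)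
  exact ⟨f, fun v => (hf v (Set.mem_univ v)).2.1,
    fun v => ⟨(hf v (Set.mem_univ v)).2.2.1, (hf v (Set.mem_univ v)).2.2.2⟩⟩
end

section
/- Every connected finite simple graph with 2K+1 vertices (K ≥ 1) contains K disjoint pairs of distinct vertices (covering all but one vertex) such that each pair is at graph distance at most 2. -/
open SimpleGraph

private lemma reach_induce_of_walk {V : Type} (G : SimpleGraph V) (s : Set V) :
    ∀ {x y : V} (p : G.Walk x y) (hx : x ∈ s) (hy : y ∈ s),
      (∀ z ∈ p.support, z ∈ s) → (G.induce s).Reachable ⟨x, hx⟩ ⟨y, hy⟩ := by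
  intro x y p
  induction p with
  | nil => intro hx hy _; exact Reachable.refl _
  | @cons a b c h q ih =>
    intro hx hy hs
    have hb : b ∈ s := hs b (by simp)
    have hadj : (G.induce s).Adj ⟨a, hx⟩ ⟨b, hb⟩ := h
    exact hadj.reachable.trans (ih hb hy (fun z hz => hs z (by simp [hz])))

private lemma key_pair {V : Type} [Fintype V] (G : SimpleGraph V) (hc : G.Connected)
    (h3 : 3 ≤ Fintype.card V) :
    ∃ a b : V, a ≠ b ∧ G.dist a b ≤ 2 ∧
      ∃ r : V, r ≠ a ∧ r ≠ b ∧
        ∀ x : V, x ≠ a → x ≠ b → ∃ p : G.Walk r x, ∀ z ∈ p.support, z ≠ a ∧ z ≠ b := by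
  classical
  have hne : Nonempty V := Fintype.card_pos_iff.mp (by omega)
  obtain ⟨r⟩ := hne
  obtain ⟨v, -, hv⟩ := Finset.exists_max_image Finset.univ (fun w => G.dist r w)
    ⟨r, Finset.mem_univ r⟩
  have hmax : ∀ w : V, G.dist r w ≤ G.dist r v := fun w => hv w (Finset.mem_univ w)
  set D := G.dist r v with hD
  -- D ≥ 1
  have hD1 : 1 ≤ D := by
    obtain ⟨y, hy⟩ := Fintype.exists_ne_of_one_lt_card (by omega) r
    have := hc.pos_dist_of_ne (Ne.symm hy)
    have := hmax y
    omega
  have hrv : r ≠ v := by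
    intro h; rw [← h] at hD; simp [SimpleGraph.dist_self] at hD; omega
  -- the splitting property of shortest walks
  have split : ∀ (x : V) (p : G.Walk r x), p.length = G.dist r x →
      ∀ z ∈ p.support, G.dist r z + G.dist z x = G.dist r x := by
    intro x p hp z hz
    have h1 := G.dist_le (p.takeUntil z hz)
    have h2 := G.dist_le (p.dropUntil z hz)
    have h4 := congrArg SimpleGraph.Walk.length (p.take_spec hz)
    rw [SimpleGraph.Walk.length_append] at h4
    have h5 := hc.dist_triangle (u := r) (v := z) (w := x)
    omega
  -- a vertex at max distance on a shortest walk must be the endpoint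
  have deep : ∀ (x : V) (p : G.Walk r x), p.length = G.dist r x →
      ∀ z ∈ p.support, G.dist r z = D → z = x := by
    intro x p hp z hz hzD
    have := split x p hp z hz
    have := hmax x
    have hz0 : G.dist z x = 0 := by omega
    exact (hc.dist_eq_zero_iff).mp hz0
  by_cases hA : ∃ w, w ≠ v ∧ G.dist r w = D ∧ G.dist v w ≤ 2
  · obtain ⟨w, hwv, hwD, hvw2⟩ := hA
    refine ⟨v, w, Ne.symm hwv, hvw2, r, ?_, ?_, ?_⟩
    · intro h; rw [← h] at hD; simp [SimpleGraph.dist_self] at hD; omega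
    · intro h; rw [← h, SimpleGraph.dist_self] at hwD; omega
    · intro x hxv hxw
      obtain ⟨p, hp⟩ := hc.exists_walk_length_eq_dist r x
      refine ⟨p, fun z hz => ⟨?_, ?_⟩⟩
      · intro h; subst h; exact hxv (deep x p hp z hz rfl).symm
      · intro h; subst h; exact hxw (deep x p hp z hz hwD).symm
  · push_neg at hA
    -- D ≥ 2, else case A would hold
    have hD2 : 2 ≤ D := by
      by_contra hlt
      have hDeq : D = 1 := by omega
      have hcard2 : 0 < (((Finset.univ : Finset V).erase v).erase r).card := by
        have h1 := Finset.pred_card_le_card_erase (a := v) (s := (Finset.univ : Finset V))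
        have h2 := Finset.pred_card_le_card_erase (a := r)
          (s := ((Finset.univ : Finset V).erase v))
        rw [Finset.card_univ] at h1
        omega
      obtain ⟨w, hw⟩ := Finset.card_pos.mp hcard2
      have hwr : w ≠ r := (Finset.mem_erase.mp hw).1
      have hwv : w ≠ v := (Finset.mem_erase.mp (Finset.mem_erase.mp hw).2).1
      have hw1 : G.dist r w = D := by
        have := hc.pos_dist_of_ne (Ne.symm hwr)
        have := hmax w
        omega
      have : G.dist v w ≤ 2 := by
        have ht := hc.dist_triangle (u := v) (v := r) (w := w)
        have : G.dist v r = D := by rw [SimpleGraph.dist_comm]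
        omega
      have := hA w hwv hw1
      omega
    -- take a neighbor u of v on a shortest walk from v to r
    obtain ⟨q, hq⟩ := hc.exists_walk_length_eq_dist v r
    have hqlen : q.length = D := by rw [hq, SimpleGraph.dist_comm]
    cases q with
    | nil => exact absurd rfl hrv.symm
    | @cons _ u _ hadj q' =>
      have hq'len : q'.length = D - 1 := by
        simp only [SimpleGraph.Walk.length_cons] at hqlen; omega
      have hur : G.dist u r ≤ D - 1 := le_of_le_of_eq (G.dist_le q') hq'len
      have hru : G.dist r u = D - 1 := by
        have h1 : G.dist r u ≤ D - 1 := by rwa [SimpleGraph.dist_comm]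
        have h2 : G.dist r v ≤ G.dist r u + G.dist u v := hc.dist_triangle
        have h3 : G.dist u v ≤ 1 := by
          have := G.dist_le hadj.symm.toWalk
          simpa using this
        omega
      have hvu : v ≠ u := by intro h; rw [← h] at hru; omega
      have hdvu1 : G.dist v u ≤ 1 := by
        have := G.dist_le hadj.toWalk
        simpa using this
      have hdvu : G.dist v u ≤ 2 := by omega
      refine ⟨v, u, hvu, hdvu, r, ?_, ?_, ?_⟩
      · intro h; rw [← h] at hD; simp [SimpleGraph.dist_self] at hD; omega
      · intro h; rw [← h, SimpleGraph.dist_self] at hru; omega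
      · intro x hxv hxu
        obtain ⟨p, hp⟩ := hc.exists_walk_length_eq_dist r x
        refine ⟨p, fun z hz => ⟨?_, ?_⟩⟩
        · intro h; subst h; exact hxv (deep x p hp z hz rfl).symm
        · intro h; subst h
          have hsp := split x p hp z hz
          rw [hru] at hsp
          have hle := hmax x
          have hzx0 : G.dist z x ≠ 0 := by
            intro h0
            exact hxu ((hc.dist_eq_zero_iff).mp h0).symm
          have hzx1 : G.dist z x = 1 := by omega
          have hrxD : G.dist r x = D := by omega
          have hvx2 : G.dist v x ≤ 2 := by
            have := hc.dist_triangle (u := v) (v := z) (w := x)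
            omega
          have := hA x hxv hrxD
          omega

private lemma aux_pairing : ∀ (K : ℕ) (V : Type) [Fintype V] (G : SimpleGraph V),
    Fintype.card V = 2 * K + 1 → G.Connected →
    ∃ (x : V) (f : V → V),
      ∀ v, v ≠ x → f v ≠ x ∧ f v ≠ v ∧ f (f v) = v ∧ G.dist v (f v) ≤ 2 := by
  intro K
  induction K with
  | zero =>
    intro V _ G hcard _
    obtain ⟨x, hx⟩ := Fintype.card_eq_one_iff.mp (by simpa using hcard)
    exact ⟨x, id, fun v hv => absurd (hx v) hv⟩
  | succ K ih =>
    intro V _ G hcard hc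
    classical
    obtain ⟨a, b, hab, hdab, r, hra, hrb, hwalks⟩ := key_pair G hc (by omega)
    set s : Set V := {a, b}ᶜ with hs
    have hmem : ∀ {x : V}, x ≠ a → x ≠ b → x ∈ s := by
      intro x h1 h2; simp [hs, h1, h2]
    have hmem' : ∀ {x : V}, x ∈ s → x ≠ a ∧ x ≠ b := by
      intro x hx; simpa [hs] using hx
    have hrs : r ∈ s := hmem hra hrb
    have hconn : (G.induce s).Connected := by
      rw [connected_iff]
      constructor
      · rintro ⟨x, hx⟩ ⟨y, hy⟩
        obtain ⟨px, hpx⟩ := hwalks x (hmem' hx).1 (hmem' hx).2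
        obtain ⟨py, hpy⟩ := hwalks y (hmem' hy).1 (hmem' hy).2
        have h1 := reach_induce_of_walk G s px hrs hx
          (fun z hz => hmem (hpx z hz).1 (hpx z hz).2)
        have h2 := reach_induce_of_walk G s py hrs hy
          (fun z hz => hmem (hpy z hz).1 (hpy z hz).2)
        exact h1.symm.trans h2
      · exact ⟨⟨r, hrs⟩⟩
    have hcards : Fintype.card s = 2 * K + 1 := by
      have h2 : Fintype.card ({a, b} : Set V) = 2 := by
        rw [Set.card_insert _ (by simpa using hab)]
        simp
      have := Fintype.card_compl_set ({a, b} : Set V)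
      rw [h2, hcard] at this
      have heq : Fintype.card s = Fintype.card ↥({a, b} : Set V)ᶜ := by
        congr!
      omega
    obtain ⟨x', f', hf'⟩ := ih s (G.induce s) hcards hconn
    set f : V → V := fun v => if v = a then b else if v = b then a
      else if h : v ∈ s then (f' ⟨v, h⟩ : V) else v with hfdef
    have hxa : (x' : V) ≠ a := (hmem' x'.2).1
    have hxb : (x' : V) ≠ b := (hmem' x'.2).2
    have hfa : f a = b := by simp [hfdef]
    have hfb : f b = a := by simp [hfdef, Ne.symm hab]
    have hfs : ∀ (y : V) (hy : y ∈ s), f y = ((f' ⟨y, hy⟩ : s) : V) := by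
      intro y hy
      obtain ⟨h1, h2⟩ := hmem' hy
      simp [hfdef, h1, h2, hy]
    refine ⟨(x' : V), f, ?_⟩
    intro v hvx
    by_cases hva : v = a
    · rw [hva, hfa]
      exact ⟨Ne.symm hxb, Ne.symm hab, hfb, hdab⟩
    · by_cases hvb : v = b
      · rw [hvb, hfb]
        exact ⟨Ne.symm hxa, hab, hfa, by rw [SimpleGraph.dist_comm]; exact hdab⟩
      · have hv : v ∈ s := hmem hva hvb
        have hne' : (⟨v, hv⟩ : s) ≠ x' := fun h => hvx (congrArg Subtype.val h)
        obtain ⟨h1, h2, h3, h4⟩ := hf' ⟨v, hv⟩ hne'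
        rw [hfs v hv]
        refine ⟨fun h => h1 (Subtype.ext h), fun h => h2 (Subtype.ext h), ?_, ?_⟩
        · rw [hfs _ (f' ⟨v, hv⟩).2]
          simp only [Subtype.coe_eta]
          rw [h3]
        · obtain ⟨p, hp⟩ := hconn.exists_walk_length_eq_dist ⟨v, hv⟩ (f' ⟨v, hv⟩)
          have hmap := G.dist_le (p.map (SimpleGraph.Embedding.induce s).toHom)
          rw [SimpleGraph.Walk.length_map, hp] at hmap
          exact le_trans hmap h4

/-- Every connected graph with `2K+1` vertices (`K ≥ 1`) contains `K` disjoint pairs of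
distinct vertices, covering all but one vertex, each pair at graph distance at most 2
(encoded by a fixed-point-free involution on the complement of one vertex). -/
theorem near_perfect_dist_le_two_pairing_odd {V : Type} [Fintype V] (G : SimpleGraph V)
    (K : ℕ) (hK : 1 ≤ K) (hcard : Fintype.card V = 2 * K + 1) (hc : G.Connected) :
    ∃ (x : V) (f : V → V),
      ∀ v, v ≠ x → f v ≠ x ∧ f v ≠ v ∧ f (f v) = v ∧ G.dist v (f v) ≤ 2 := by
  exact aux_pairing K V G hcard hc
end

section
/- For any connected finite simple graph G^o with N vertices and any integer K with ⌈N/2⌉ ≤ K ≤ N−1, there exists a connected graph G with K vertices and a set S of N−K disjoint vertex pairs of G^o, each pair at graph distance at most 2, such that contracting the pairs of S in G^o yields G. -/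
open SimpleGraph

/-- Predecessor along shortest paths: any vertex `y ≠ r` in a connected graph has a
neighbor strictly closer to `r`. -/
lemma pred_lemma {V : Type} (G : SimpleGraph V) (hc : G.Connected) (r y : V)
    (hy : y ≠ r) : ∃ z, G.Adj z y ∧ G.dist r z + 1 = G.dist r y := by
  obtain ⟨w, hw⟩ := (hc r y).exists_walk_length_eq_dist
  have hpos : 0 < G.dist r y := hc.pos_dist_of_ne (Ne.symm hy)
  cases hrev : w.reverse with
  | nil => exact absurd rfl hy
  | cons h q =>
    -- h : G.Adj y z, q : G.Walk z r
    rename_i z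
    refine ⟨z, h.symm, ?_⟩
    have hlen : q.length + 1 = G.dist r y := by
      have := congrArg SimpleGraph.Walk.length hrev
      simp [hw] at this
      omega
    have h1 : G.dist r z ≤ q.length := by
      have := SimpleGraph.dist_le q.reverse
      simpa using this
    have h2 : G.dist r y ≤ G.dist r z + 1 := by
      obtain ⟨w', hw'⟩ := (hc r z).exists_walk_length_eq_dist
      have := SimpleGraph.dist_le (w'.concat h.symm)
      simpa [SimpleGraph.Walk.length_concat, hw'] using this
    omega

lemma induce_connected {V : Type} (G : SimpleGraph V) (s : Set V) (r : V)
    (hr : r ∈ s)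
    (h : ∀ y ∈ s, y ≠ r → ∃ z ∈ s, G.Adj z y ∧ G.dist r z < G.dist r y) :
    (G.induce s).Connected := by
  rw [SimpleGraph.connected_iff]
  have key : ∀ (n : ℕ) (y : V) (hy : y ∈ s), G.dist r y ≤ n →
      (G.induce s).Reachable ⟨r, hr⟩ ⟨y, hy⟩ := by
    intro n
    induction n with
    | zero =>
      intro y hy h0
      by_cases hyr : y = r
      · subst hyr; exact SimpleGraph.Reachable.refl _
      · obtain ⟨z, _, _, hlt⟩ := h y hy hyr
        omega
    | succ n ih =>
      intro y hy hle
      by_cases hyr : y = r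
      · subst hyr; exact SimpleGraph.Reachable.refl _
      · obtain ⟨z, hzs, hadj, hlt⟩ := h y hy hyr
        have hrz : (G.induce s).Reachable ⟨r, hr⟩ ⟨z, hzs⟩ := ih z hzs (by omega)
        have hadj' : (G.induce s).Adj ⟨z, hzs⟩ ⟨y, hy⟩ := by
          simp [SimpleGraph.comap_adj]
          exact hadj
        exact hrz.trans hadj'.reachable
  refine ⟨fun a b => ?_, ⟨⟨r, hr⟩⟩⟩
  have ha := key (G.dist r a.1) a.1 a.2 le_rfl
  have hb := key (G.dist r b.1) b.1 b.2 le_rfl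
  exact ha.symm.trans hb

lemma removable_pair {V : Type} [Fintype V] (G : SimpleGraph V)
    (hc : G.Connected) (h3 : 3 ≤ Fintype.card V) :
    ∃ u v : V, u ≠ v ∧ (∃ w : G.Walk u v, w.length ≤ 2) ∧
      (G.induce ({u, v}ᶜ : Set V)).Connected := by
  classical
  have hne : Nonempty V := ⟨(Fintype.card_pos_iff.mp (by omega)).some⟩
  obtain ⟨r⟩ := hne
  obtain ⟨u, -, hu⟩ := Finset.exists_max_image Finset.univ (G.dist r) ⟨r, Finset.mem_univ r⟩
  have hmax : ∀ x, G.dist r x ≤ G.dist r u := fun x => hu x (Finset.mem_univ x)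
  -- u is at positive distance from r
  have hcard2 : 1 < Fintype.card V := by omega
  obtain ⟨y0, hy0⟩ := Fintype.exists_ne_of_one_lt_card hcard2 r
  have hdu : 0 < G.dist r u :=
    lt_of_lt_of_le (hc.pos_dist_of_ne (Ne.symm hy0)) (hmax y0)
  have hur : u ≠ r := by
    intro h; rw [h] at hdu; simp [SimpleGraph.dist_self] at hdu
  obtain ⟨w, hadjwu, hdw⟩ := pred_lemma G hc r u hur
  have hru : r ≠ u := Ne.symm hur
  by_cases hA : ∃ x, x ≠ u ∧ G.Adj w x ∧ G.dist r x = G.dist r u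
  · -- Case A: pair (u, x), both at maximum distance
    obtain ⟨x, hxu, hadjwx, hdx⟩ := hA
    have hrx : r ≠ x := by
      intro h; rw [← h, SimpleGraph.dist_self] at hdx; omega
    refine ⟨u, x, Ne.symm hxu, ⟨SimpleGraph.Walk.cons hadjwu.symm
      (SimpleGraph.Walk.cons hadjwx SimpleGraph.Walk.nil), by simp⟩, ?_⟩
    refine induce_connected G _ r (by simp [hru, hrx]) ?_
    intro y hy hyr
    obtain ⟨z, hadj, hdz⟩ := pred_lemma G hc r y hyr
    have hzlt : G.dist r z < G.dist r u := by
      have := hmax y; omega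
    refine ⟨z, ?_, hadj, by omega⟩
    simp only [Set.mem_compl_iff, Set.mem_insert_iff, Set.mem_singleton_iff]
    push_neg
    constructor
    · intro h; rw [h] at hzlt; omega
    · intro h; rw [h, hdx] at hzlt; omega
  · -- Case B: pair (u, w)
    push_neg at hA
    have huw : u ≠ w := by
      intro h; rw [h] at hdw; omega
    have hrw : r ≠ w := by
      intro h
      -- then dist r u = 1; find a third vertex
      subst h
      have hdu1 : G.dist r u = 1 := by
        rw [SimpleGraph.dist_self] at hdw; omega
      obtain ⟨y, hy1, hy2⟩ : ∃ y : V, y ≠ r ∧ y ≠ u := by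
        by_contra hcon
        push_neg at hcon
        have hsub : (Finset.univ : Finset V) ⊆ {r, u} := by
          intro y _
          simp only [Finset.mem_insert, Finset.mem_singleton]
          by_cases h : y = r
          · exact Or.inl h
          · exact Or.inr (hcon y h)
        have := Finset.card_le_card hsub
        have h2 := Finset.card_insert_le r ({u} : Finset V)
        simp [Finset.card_univ] at this h2
        omega
      have hdy : G.dist r y = 1 := by
        have h1 := hmax y
        have h2 : 0 < G.dist r y := hc.pos_dist_of_ne (Ne.symm hy1)
        omega
      obtain ⟨z, hadj, hdz⟩ := pred_lemma G hc r y hy1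
      have hz0 : G.dist r z = 0 := by omega
      have hzr : z = r := (hc.dist_eq_zero_iff.mp hz0).symm
      subst hzr
      have := hA y hy2 hadj
      omega
    refine ⟨u, w, huw, ⟨SimpleGraph.Walk.cons hadjwu.symm SimpleGraph.Walk.nil, by simp⟩, ?_⟩
    refine induce_connected G _ r (by simp [hru, hrw]) ?_
    intro y hy hyr
    obtain ⟨z, hadj, hdz⟩ := pred_lemma G hc r y hyr
    have hymax := hmax y
    have hzu : z ≠ u := by
      intro h; rw [h] at hdz; omega
    have hzw : z ≠ w := by
      intro h
      subst h
      have hyu : y ≠ u := by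
        simp only [Set.mem_compl_iff, Set.mem_insert_iff, Set.mem_singleton_iff] at hy
        tauto
      have := hA y hyu hadj
      omega
    refine ⟨z, ?_, hadj, by omega⟩
    simp only [Set.mem_compl_iff, Set.mem_insert_iff, Set.mem_singleton_iff]
    tauto

lemma exists_pairs : ∀ (m : ℕ) (V : Type) [Fintype V] (G : SimpleGraph V),
    G.Connected → 2 * m ≤ Fintype.card V →
    ∃ L : List (V × V), L.length = m ∧ L.Nodup ∧
      (∀ q ∈ L, q.1 ≠ q.2 ∧ ∃ w : G.Walk q.1 q.2, w.length ≤ 2) ∧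
      (∀ q ∈ L, ∀ q' ∈ L, q ≠ q' →
        q.1 ≠ q'.1 ∧ q.1 ≠ q'.2 ∧ q.2 ≠ q'.1 ∧ q.2 ≠ q'.2) := by
  intro m
  induction m with
  | zero => intro V _ G _ _; exact ⟨[], by simp, by simp, by simp, by simp⟩
  | succ m ih =>
    intro V _ G hc hcard
    classical
    by_cases h3 : 3 ≤ Fintype.card V
    · obtain ⟨u, v, huv, hwalk, hconn⟩ := removable_pair G hc h3
      set s : Set V := ({u, v}ᶜ : Set V) with hs
      have hcards : Fintype.card ↥s = Fintype.card V - 2 := by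
        have h1 : ({u, v} : Set V).ncard = 2 := Set.ncard_pair huv
        have h2 := Set.ncard_add_ncard_compl ({u, v} : Set V)
        have h4 : Nat.card V = Fintype.card V := Nat.card_eq_fintype_card
        have h5 : Fintype.card ↥s = s.ncard := by
          rw [← Nat.card_coe_set_eq, Nat.card_eq_fintype_card]
        rw [h5]
        simp only [hs]
        omega
      obtain ⟨L', hlen, hnd, hprop, hfacts⟩ := ih ↥s (G.induce s) hconn (by omega)
      have hinj : Function.Injective (fun q : ↥s × ↥s => ((q.1 : V), (q.2 : V))) := by
        intro a b hab
        simp only [Prod.mk.injEq] at hab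
        exact Prod.ext (Subtype.ext hab.1) (Subtype.ext hab.2)
      refine ⟨(u, v) :: L'.map (fun q => ((q.1 : V), (q.2 : V))), by simp [hlen], ?_, ?_, ?_⟩
      · rw [List.nodup_cons]
        constructor
        · intro hmem
          obtain ⟨q, hq, hq2⟩ := List.mem_map.mp hmem
          have hm1 := q.1.2
          have : (q.1 : V) = u := congrArg Prod.fst hq2
          simp only [hs, Set.mem_compl_iff, Set.mem_insert_iff, Set.mem_singleton_iff] at hm1
          exact hm1 (Or.inl this)
        · exact hnd.map hinj
      · intro q hq
        rcases List.mem_cons.mp hq with h | h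
        · subst h; exact ⟨huv, hwalk⟩
        · obtain ⟨q', hq', rfl⟩ := List.mem_map.mp h
          obtain ⟨hne, w, hw⟩ := hprop q' hq'
          refine ⟨fun h => hne (Subtype.ext h), ?_⟩
          refine ⟨w.map (SimpleGraph.Embedding.induce s).toHom, ?_⟩
          exact (SimpleGraph.Walk.length_map _ _).trans_le hw
      · -- disjointness facts
        intro q hq q' hq' hqq'
        have memc : ∀ z : ↥s, (z : V) ≠ u ∧ (z : V) ≠ v := by
          intro z
          have := z.2
          simp only [hs, Set.mem_compl_iff, Set.mem_insert_iff, Set.mem_singleton_iff] at this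
          push_neg at this
          exact this
        rcases List.mem_cons.mp hq with h | h
        · rcases List.mem_cons.mp hq' with h' | h'
          · exact absurd (h.trans h'.symm) hqq'
          · obtain ⟨q'', hq'', rfl⟩ := List.mem_map.mp h'
            subst h
            exact ⟨(memc q''.1).1.symm, (memc q''.2).1.symm,
              (memc q''.1).2.symm, (memc q''.2).2.symm⟩
        · obtain ⟨q0, hq0, rfl⟩ := List.mem_map.mp h
          rcases List.mem_cons.mp hq' with h' | h'
          · subst h'
            exact ⟨(memc q0.1).1, (memc q0.1).2, (memc q0.2).1, (memc q0.2).2⟩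
          · obtain ⟨q0', hq0', rfl⟩ := List.mem_map.mp h'
            have hne0 : q0 ≠ q0' := fun h => hqq' (by rw [h])
            obtain ⟨a1, a2, a3, a4⟩ := hfacts q0 hq0 q0' hq0' hne0
            exact ⟨fun h => a1 (Subtype.ext h), fun h => a2 (Subtype.ext h),
              fun h => a3 (Subtype.ext h), fun h => a4 (Subtype.ext h)⟩
    · -- Fintype.card V = 2, m = 0
      have hm : m = 0 := by omega
      subst hm
      have : Nonempty V := by
        have : 0 < Fintype.card V := by omega
        exact Fintype.card_pos_iff.mp this
      obtain ⟨u⟩ := this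
      obtain ⟨v', hv'⟩ := Fintype.exists_ne_of_one_lt_card (by omega) u
      obtain ⟨w⟩ := hc u v'
      cases w with
      | nil => exact absurd rfl hv'.symm
      | cons h p =>
        rename_i x
        refine ⟨[(u, x)], by simp, by simp, ?_, by simp⟩
        intro q hq
        simp only [List.mem_singleton] at hq
        subst hq
        exact ⟨h.ne, SimpleGraph.Walk.cons h SimpleGraph.Walk.nil, by simp⟩

/-- Expressivity: for any connected graph `G` with `N` vertices and any
`K ∈ [⌈N/2⌉, N-1]`, there is a connected graph `G'` with `K` vertices obtained from `G` by
contracting `N - K` disjoint vertex pairs, each pair at graph distance at most 2. -/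
theorem exists_contraction_to_K_vertices {V : Type} [Fintype V] (G : SimpleGraph V)
    (hc : G.Connected) (K : ℕ) (h1 : (Fintype.card V + 1) / 2 ≤ K)
    (h2 : K ≤ Fintype.card V - 1) :
    ∃ (G' : SimpleGraph (Fin K)) (p : V → Fin K),
      G'.Connected ∧ Function.Surjective p ∧
      (∀ u v w : V, p u = p v → p v = p w → u = v ∨ v = w ∨ u = w) ∧
      (∀ u v : V, p u = p v → u ≠ v → G.dist u v ≤ 2) ∧
      (∀ a b : Fin K, G'.Adj a b ↔ a ≠ b ∧ ∃ u v, G.Adj u v ∧ p u = a ∧ p v = b) := by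
  classical
  have hnpos : 0 < Fintype.card V := Fintype.card_pos_iff.mpr hc.nonempty
  set n := Fintype.card V with hn
  have hKn : K ≤ n := by omega
  have hK1 : 1 ≤ K := by omega
  obtain ⟨L, hlen, hnd, hprop, hfacts⟩ := exists_pairs (n - K) V G hc (by omega)
  -- the representative function: each "second" element is mapped to its "first" partner
  let rep : V → V := fun x => if h : ∃ q ∈ L, q.2 = x then h.choose.1 else x
  have hrep_pos : ∀ (x : V) (h : ∃ q ∈ L, q.2 = x), rep x = h.choose.1 :=
    fun x h => dif_pos h
  have hrep_neg : ∀ x : V, (¬ ∃ q ∈ L, q.2 = x) → rep x = x := fun x h => dif_neg h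
  have hsnd_inj : ∀ q ∈ L, ∀ q' ∈ L, q.2 = q'.2 → q = q' := by
    intro q hq q' hq' h
    by_contra hne
    exact (hfacts q hq q' hq' hne).2.2.2 h
  have hRa : ∀ q ∈ L, rep q.2 = q.1 := by
    intro q hq
    have h : ∃ q' ∈ L, q'.2 = q.2 := ⟨q, hq, rfl⟩
    rw [hrep_pos q.2 h]
    have hspec := h.choose_spec
    have := hsnd_inj h.choose hspec.1 q hq hspec.2
    rw [this]
  have hRcases : ∀ x : V, (rep x = x ∧ ∀ q ∈ L, q.2 ≠ x) ∨
      ∃ q ∈ L, q.2 = x ∧ rep x = q.1 := by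
    intro x
    by_cases h : ∃ q ∈ L, q.2 = x
    · obtain ⟨q, hq, hq2⟩ := h
      right
      exact ⟨q, hq, hq2, by rw [← hq2]; exact hRa q hq⟩
    · left
      push_neg at h
      exact ⟨hrep_neg x (by push_neg; exact h), h⟩
  have hrep_not_snd : ∀ x : V, ∀ q ∈ L, q.2 ≠ rep x := by
    intro x q hq
    rcases hRcases x with ⟨he, hno⟩ | ⟨q0, hq0, hq02, he⟩
    · rw [he]; exact hno q hq
    · rw [he]
      by_cases heq : q = q0
      · subst heq; exact (hprop q hq).1.symm
      · exact (hfacts q hq q0 hq0 heq).2.2.1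
  have hrep_idem : ∀ x : V, rep (rep x) = rep x := by
    intro x
    apply hrep_neg
    push_neg
    exact fun q hq => hrep_not_snd x q hq
  have hkey : ∀ x y : V, rep x = rep y → x ≠ y →
      ∃ q ∈ L, (q.1 = x ∧ q.2 = y) ∨ (q.1 = y ∧ q.2 = x) := by
    intro x y hxy hne
    rcases hRcases x with ⟨hex, hnox⟩ | ⟨q, hq, hq2, hex⟩
    · rcases hRcases y with ⟨hey, _⟩ | ⟨q', hq', hq'2, hey⟩
      · exact absurd (by rw [← hex, hxy, hey]) hne
      · refine ⟨q', hq', Or.inl ⟨?_, hq'2⟩⟩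
        rw [← hey, ← hxy, hex]
      -- q'.1 = rep y = rep x = x
    · rcases hRcases y with ⟨hey, _⟩ | ⟨q', hq', hq'2, hey⟩
      · refine ⟨q, hq, Or.inr ⟨?_, hq2⟩⟩
        rw [← hex, hxy, hey]
      · exfalso
        have h11 : q.1 = q'.1 := by rw [← hex, ← hey, hxy]
        by_cases heq : q = q'
        · exact hne (by rw [← hq2, ← hq'2, heq])
        · exact (hfacts q hq q' hq' heq).1 h11
  -- the finset of class representatives
  let T : Finset V := Finset.univ.filter (fun x => rep x = x)
  have hmemT : ∀ x : V, rep x ∈ T := by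
    intro x
    simp only [T, Finset.mem_filter, Finset.mem_univ, true_and]
    exact hrep_idem x
  have hTfix : ∀ x ∈ T, rep x = x := by
    intro x hx
    simpa [T, Finset.mem_filter] using hx
  have hsndnd : (L.map Prod.snd).Nodup :=
    hnd.map_on (fun q hq q' hq' h => hsnd_inj q hq q' hq' h)
  have hTcard : T.card = K := by
    have hTeq : T = Finset.univ \ (L.map Prod.snd).toFinset := by
      ext x
      simp only [T, Finset.mem_filter, Finset.mem_univ, true_and, Finset.mem_sdiff,
        List.mem_toFinset, List.mem_map]
      constructor
      · intro hx
        rintro ⟨q, hq, hq2⟩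
        have := hRa q hq
        rw [hq2, hx] at this
        exact (hprop q hq).1 (this.symm.trans hq2.symm)
      · intro hx
        apply hrep_neg
        rintro ⟨q, hq, hq2⟩
        exact hx ⟨q, hq, hq2⟩
    rw [hTeq, Finset.card_sdiff_of_subset (Finset.subset_univ _), Finset.card_univ,
      List.toFinset_card_of_nodup hsndnd, List.length_map, hlen]
    omega
  let e : ↥T ≃ Fin K := Finset.equivFinOfCardEq hTcard
  let p : V → Fin K := fun x => e ⟨rep x, hmemT x⟩
  have hpeq : ∀ x y : V, p x = p y ↔ rep x = rep y := by
    intro x y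
    constructor
    · intro h
      have := e.injective h
      exact Subtype.ext_iff.mp this
    · intro h
      simp only [p]
      congr 1
      exact Subtype.ext h
  have hsurj : Function.Surjective p := by
    intro b
    refine ⟨(e.symm b).1, ?_⟩
    have h1 : rep (e.symm b).1 = (e.symm b).1 := hTfix _ (e.symm b).2
    simp only [p]
    rw [show (⟨rep (e.symm b).1, hmemT _⟩ : ↥T) = e.symm b from Subtype.ext h1]
    exact e.apply_symm_apply b
  -- the contracted graph
  let G' : SimpleGraph (Fin K) :=
    { Adj := fun a b => a ≠ b ∧ ∃ x y, G.Adj x y ∧ p x = a ∧ p y = b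
      symm := by
        constructor
        rintro a b ⟨hab, x, y, h, hx, hy⟩
        exact ⟨hab.symm, y, x, h.symm, hy, hx⟩
      loopless := ⟨fun a h => h.1 rfl⟩ }
  refine ⟨G', p, ?_, hsurj, ?_, ?_, fun a b => Iff.rfl⟩
  · -- connectivity
    rw [SimpleGraph.connected_iff]
    refine ⟨?_, ⟨⟨0, by omega⟩⟩⟩
    have hwr : ∀ (x y : V) (w : G.Walk x y), G'.Reachable (p x) (p y) := by
      intro x y w
      induction w with
      | nil => exact SimpleGraph.Reachable.refl _
      | cons h q ih =>
        rename_i a b c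
        refine SimpleGraph.Reachable.trans ?_ ih
        by_cases hpe : p a = p b
        · rw [hpe]
        · exact (SimpleGraph.Adj.reachable ⟨hpe, a, b, h, rfl, rfl⟩)
    intro a b
    obtain ⟨x, rfl⟩ := hsurj a
    obtain ⟨y, rfl⟩ := hsurj b
    obtain ⟨w⟩ := hc x y
    exact hwr x y w
  · -- fibers have at most two elements
    intro u v w huv hvw
    by_contra hcon
    push_neg at hcon
    obtain ⟨h12, h23, h13⟩ := hcon
    obtain ⟨q, hq, hq'⟩ := hkey u v ((hpeq u v).mp huv) h12
    obtain ⟨q', hq2, hq2'⟩ := hkey v w ((hpeq v w).mp hvw) h23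
    by_cases heq : q = q'
    · subst heq
      rcases hq' with ⟨a1, a2⟩ | ⟨a1, a2⟩ <;> rcases hq2' with ⟨b1, b2⟩ | ⟨b1, b2⟩
      · exact h12 (a1.symm.trans b1)
      · exact h13 (a1.symm.trans b1)
      · exact h13 (a2.symm.trans b2)
      · exact h23 (a1.symm.trans b1)
    · obtain ⟨c1, c2, c3, c4⟩ := hfacts q hq q' hq2 heq
      rcases hq' with ⟨a1, a2⟩ | ⟨a1, a2⟩ <;> rcases hq2' with ⟨b1, b2⟩ | ⟨b1, b2⟩
      · exact c3 (a2.trans b1.symm)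
      · exact c4 (a2.trans b2.symm)
      · exact c1 (a1.trans b1.symm)
      · exact c2 (a1.trans b2.symm)
  · -- distance bound
    intro u v huv hne
    obtain ⟨q, hq, hq'⟩ := hkey u v ((hpeq u v).mp huv) hne
    obtain ⟨-, w, hw⟩ := hprop q hq
    have hd := SimpleGraph.dist_le w
    rcases hq' with ⟨a1, a2⟩ | ⟨a1, a2⟩
    · subst a1; subst a2; omega
    · subst a1; subst a2
      rw [SimpleGraph.dist_comm]
      omega
end

section
/- Suppose a graph G^o is obtained from a graph G by replacing each vertex v in a subset I_u ⊆ V(G) with two children vertices, such that: (a) for each v in I_u, either the two children are adjacent or there exists a neighbor u of v in G such that both children are adjacent to some vertex arising from u; and (b) for every edge {i, j} of G, at least one vertex arising from i is adjacent to at least one vertex arising from j. If G is connected, then G^o is connected. -/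
/-- Vertex-splitting (unpooling) preserves connectivity: `Go` arises from `G` by splitting
each vertex of `Iu` into two children (parent map `π`); (a) for each split vertex, either
its two children are adjacent or some vertex over a neighbor is adjacent to both children;
(b) each edge of `G` induces at least one edge between the corresponding fibers.  If `G`
is connected, so is `Go`. -/
theorem unpooling_connected {V W : Type} (G : SimpleGraph V) (Go : SimpleGraph W)
    (π : W → V) (Iu : Set V)
    (hfib2 : ∀ v ∈ Iu, ∃ a b : W, a ≠ b ∧ π a = v ∧ π b = v ∧
      ∀ c, π c = v → c = a ∨ c = b)
    (hfib1 : ∀ v ∉ Iu, ∃! a : W, π a = v)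
    (ha : ∀ v ∈ Iu, ∀ a b : W, a ≠ b → π a = v → π b = v →
      Go.Adj a b ∨ ∃ u, G.Adj v u ∧ ∃ c, π c = u ∧ Go.Adj c a ∧ Go.Adj c b)
    (hb : ∀ i j : V, G.Adj i j → ∃ a b : W, π a = i ∧ π b = j ∧ Go.Adj a b)
    (hc : G.Connected) : Go.Connected := by
  have hsurj : ∀ v : V, ∃ w : W, π w = v := by
    intro v
    by_cases hI : v ∈ Iu
    · obtain ⟨a, _, _, hav, _⟩ := hfib2 v hI
      exact ⟨a, hav⟩
    · obtain ⟨a, hav, _⟩ := hfib1 v hI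
      exact ⟨a, hav⟩
  have hsame : ∀ w w' : W, π w = π w' → Go.Reachable w w' := by
    intro w w' h
    by_cases hww : w = w'
    · subst hww; rfl
    · by_cases hI : π w ∈ Iu
      · rcases ha (π w) hI w w' hww rfl h.symm with hadj | ⟨u, _, c, _, hca, hcb⟩
        · exact hadj.reachable
        · exact (hca.reachable.symm).trans hcb.reachable
      · obtain ⟨a, _, huniq⟩ := hfib1 (π w) hI
        exact absurd ((huniq w rfl).trans (huniq w' h.symm).symm) hww
  have hstep : ∀ i j : V, G.Adj i j → ∀ w w' : W, π w = i → π w' = j →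
      Go.Reachable w w' := by
    intro i j hij w w' hwi hwj
    obtain ⟨a, b, hai, hbj, hab⟩ := hb i j hij
    exact ((hsame w a (by rw [hwi, hai])).trans hab.reachable).trans
      (hsame b w' (by rw [hbj, hwj]))
  have key : ∀ {i j : V}, G.Reachable i j → ∀ w w', π w = i → π w' = j →
      Go.Reachable w w' := by
    intro i j hij
    obtain ⟨p⟩ := hij
    induction p with
    | nil =>
      intro w w' h1 h2
      exact hsame w w' (h1.trans h2.symm)
    | @cons i u j h p ih =>
      intro w w' h1 h2
      obtain ⟨x, hx⟩ := hsurj u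
      exact (hstep i u h w x h1 hx).trans (ih x w' hx h2)
  have hne : Nonempty W := by
    obtain ⟨v⟩ := hc.nonempty
    obtain ⟨w, _⟩ := hsurj v
    exact ⟨w⟩
  exact ⟨fun w w' => key (hc.preconnected (π w) (π w')) w w' rfl rfl⟩
end

section
/- Let G^o be a simple graph obtained from a connected graph G by the vertex-splitting construction (each split vertex's two children are connected via an intra-link or via a common designated neighbor, and each original edge induces at least one edge between corresponding vertex groups). Then for any two vertices of G^o whose parent vertices are joined by a path of length n−1 in G, there is a path between them in G^o. -/
/-- In the vertex-splitting construction, any two vertices of the output graph whose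
parents are joined by a path of length `n - 1` in the input graph are joined by a path in
the output graph. -/
theorem unpooling_path_lift {V W : Type} (G : SimpleGraph V) (Go : SimpleGraph W)
    (π : W → V) (Iu : Set V)
    (hfib2 : ∀ v ∈ Iu, ∃ a b : W, a ≠ b ∧ π a = v ∧ π b = v ∧
      ∀ c, π c = v → c = a ∨ c = b)
    (hfib1 : ∀ v ∉ Iu, ∃! a : W, π a = v)
    (ha : ∀ v ∈ Iu, ∀ a b : W, a ≠ b → π a = v → π b = v →
      Go.Adj a b ∨ ∃ u, G.Adj v u ∧ ∃ c, π c = u ∧ Go.Adj c a ∧ Go.Adj c b)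
    (hb : ∀ i j : V, G.Adj i j → ∃ a b : W, π a = i ∧ π b = j ∧ Go.Adj a b)
    (hconn : G.Connected)
    (x y : W) (n : ℕ) (hpath : ∃ pw : G.Walk (π x) (π y), pw.length = n - 1) :
    Go.Reachable x y := by
  classical
  have fib : ∀ a b : W, π a = π b → Go.Reachable a b := by
    intro a b hab
    by_cases hI : π a ∈ Iu
    · by_cases hab' : a = b
      · subst hab'; exact SimpleGraph.Reachable.refl a
      · rcases ha (π a) hI a b hab' rfl hab.symm with h | ⟨u, _, c, _, hca, hcb⟩
        · exact h.reachable
        · exact (hca.reachable.symm).trans hcb.reachable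
    · obtain ⟨w, _, huniq⟩ := hfib1 (π a) hI
      have : a = b := by rw [huniq a rfl, huniq b hab.symm]
      subst this; exact SimpleGraph.Reachable.refl a
  have main : ∀ (u v : V) (p : G.Walk u v) (a b : W), π a = u → π b = v →
      Go.Reachable a b := by
    intro u v p
    induction p with
    | nil => intro a b hau hbv; exact fib a b (by rw [hau, hbv])
    | cons h p ih =>
      intro a b hau hbv
      obtain ⟨a', b', ha', hb', hadj⟩ := hb _ _ h
      exact ((fib a a' (by rw [hau, ha'])).trans hadj.reachable).trans (ih b' b hb' hbv)
  obtain ⟨p⟩ := hconn.preconnected (π x) (π y)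
  exact main _ _ p x y rfl rfl
end

section
/- For every connected finite simple graph G^o with N ≥ 3 vertices, there exist a connected graph G on 3 vertices and a sequence of ⌈log₂(N/3)⌉ vertex-splitting (unpooling) operations whose composition maps G to G^o. -/
/-- `IsUnpooling G G'` : `G'` arises from `G` by one unpooling (vertex-splitting) step,
with parent map `π` and split set `Iu`; edges of `G'` live over loops or edges of `G`,
children pairs are linked directly or via a common neighbor, and each edge of `G` induces
an edge between fibers. -/
def IsUnpooling {α β : Type} (G : SimpleGraph α) (G' : SimpleGraph β) : Prop :=
  ∃ (π : β → α) (Iu : Set α),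
    (∀ v ∈ Iu, ∃ a b : β, a ≠ b ∧ π a = v ∧ π b = v ∧ ∀ c, π c = v → c = a ∨ c = b) ∧
    (∀ v ∉ Iu, ∃! a : β, π a = v) ∧
    (∀ a b : β, G'.Adj a b → π a = π b ∨ G.Adj (π a) (π b)) ∧
    (∀ v ∈ Iu, ∀ a b : β, a ≠ b → π a = v → π b = v →
      G'.Adj a b ∨ ∃ u, G.Adj v u ∧ ∃ c, π c = u ∧ G'.Adj c a ∧ G'.Adj c b) ∧
    (∀ i j : α, G.Adj i j → ∃ a b : β, π a = i ∧ π b = j ∧ G'.Adj a b)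


section UnpoolingProof

open SimpleGraph Function


lemma shortest_support_lt {V : Type} [DecidableEq V] (G : SimpleGraph V) {r x : V} (w : G.Walk r x)
    (hw : w.length = G.dist r x) {y : V} (hy : y ∈ w.support) (hyx : y ≠ x) :
    G.dist r y < G.dist r x := by
  have hsplit := w.take_spec hy
  have hlen : (w.takeUntil y hy).length + (w.dropUntil y hy).length = w.length := by
    conv_rhs => rw [← hsplit]
    rw [SimpleGraph.Walk.length_append]
  have h1 : G.dist r y ≤ (w.takeUntil y hy).length := SimpleGraph.dist_le _
  have h2 : (w.dropUntil y hy).length ≠ 0 := fun h0 =>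
    hyx (SimpleGraph.Walk.eq_of_length_eq_zero h0)
  omega
/-- hub-reach: if every vertex of `s` is joined to `r ∈ s` by a walk with support in `s`,
then `G.induce s` is connected. -/
lemma induce_connected_of_walks {V : Type} (G : SimpleGraph V) {s : Set V} {r : V} (hr : r ∈ s)
    (h : ∀ v ∈ s, ∃ w : G.Walk r v, ∀ y ∈ w.support, y ∈ s) : (G.induce s).Connected := by
  apply SimpleGraph.induce_connected_of_patches r hr
  intro v hv
  obtain ⟨w, hw⟩ := h v hv
  refine ⟨{y | y ∈ w.support}, fun y hy => hw y hy, w.start_mem_support, w.end_mem_support, ?_⟩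
  exact (w.connected_induce_support).preconnected _ _

lemma removal_lemma {V : Type} [Fintype V] [DecidableEq V] (H : SimpleGraph V)
    (hc : H.Connected) (h3 : 3 ≤ Fintype.card V) :
    ∃ a b : V, a ≠ b ∧ (H.Adj a b ∨ ∃ c, H.Adj c a ∧ H.Adj c b) ∧
      (H.induce {a, b}ᶜ).Connected := by
  have hne : Nonempty V := hc.nonempty
  obtain ⟨r⟩ := hne
  obtain ⟨a, -, hmax⟩ := Finset.exists_max_image Finset.univ (fun x => H.dist r x)
    ⟨r, Finset.mem_univ r⟩
  have hmax : ∀ x : V, H.dist r x ≤ H.dist r a := fun x => hmax x (Finset.mem_univ x)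
  set d := H.dist r a with hd
  -- d ≥ 1
  obtain ⟨x0, hx0⟩ := Fintype.exists_ne_of_one_lt_card (by omega) r
  have hd1 : 1 ≤ d := le_trans (hc.pos_dist_of_ne (Ne.symm hx0)) (hmax x0)
  have hra : r ≠ a := by
    intro h; rw [h] at hd; simp [SimpleGraph.dist_self] at hd; omega
  obtain ⟨w, hwlen⟩ := hc.exists_walk_length_eq_dist r a
  obtain ⟨b, hab, w2, hw2⟩ := SimpleGraph.Walk.exists_eq_cons_of_ne (Ne.symm hra) w.reverse
  have hbsup : b ∈ w.support := by
    have : b ∈ w.reverse.support := by rw [hw2]; simp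
    rwa [SimpleGraph.Walk.support_reverse, List.mem_reverse] at this
  have hba : b ≠ a := fun h => H.irrefl (h ▸ hab)
  have hdb : H.dist r b < d := shortest_support_lt H w hwlen hbsup hba
  have hdbe : H.dist r b = d - 1 := by
    have htri : d ≤ H.dist r b + H.dist b a := hc.dist_triangle
    have : H.dist b a = 1 := SimpleGraph.dist_eq_one_iff_adj.mpr hab.symm
    omega
  by_cases hcase : ∃ a', a' ≠ a ∧ H.Adj b a' ∧ H.dist r a' = d
  · obtain ⟨a', ha'a, hba', hda'⟩ := hcase
    refine ⟨a, a', Ne.symm ha'a, Or.inr ⟨b, hab.symm, hba'⟩, ?_⟩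
    have hrs : r ∈ ({a, a'} : Set V)ᶜ := by
      simp only [Set.mem_compl_iff, Set.mem_insert_iff, Set.mem_singleton_iff]
      push_neg
      constructor
      · exact hra
      · intro h; rw [← h] at hda'; simp [SimpleGraph.dist_self] at hda'; omega
    apply induce_connected_of_walks H hrs
    intro v hv
    simp only [Set.mem_compl_iff, Set.mem_insert_iff, Set.mem_singleton_iff] at hv
    push_neg at hv
    obtain ⟨p, hplen⟩ := hc.exists_walk_length_eq_dist r v
    refine ⟨p, fun y hy => ?_⟩
    simp only [Set.mem_compl_iff, Set.mem_insert_iff, Set.mem_singleton_iff]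
    push_neg
    by_cases hyv : y = v
    · exact hyv ▸ hv
    · have := shortest_support_lt H p hplen hy hyv
      have hv' := hmax v
      constructor
      · intro h; rw [h] at this; omega
      · intro h; rw [h, hda'] at this; omega
  · -- pair (a, b)
    push_neg at hcase
    have hd2 : 2 ≤ d := by
      by_contra hlt
      have hd1' : d = 1 := by omega
      have hbr : b = r := by
        have : H.dist r b = 0 := by omega
        exact ((hc.dist_eq_zero_iff).mp this).symm
      obtain ⟨x, hx⟩ : ∃ x, x ≠ a ∧ x ≠ r := by
        by_contra hno
        push_neg at hno
        have hsub : (Finset.univ : Finset V) ⊆ {a, r} := by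
          intro x _
          rcases eq_or_ne x a with h | h
          · simp [h]
          · simp [hno x h]
        have h5 := Finset.card_le_card hsub
        have h6 : ({a, r} : Finset V).card ≤ 2 := Finset.card_insert_le _ _ |>.trans (by simp)
        rw [Finset.card_univ] at h5
        omega
      have hdx : H.dist r x = 1 := by
        have h1 := hc.pos_dist_of_ne (Ne.symm hx.2)
        have h2 := hmax x
        omega
      exact hcase x hx.1 (by rw [hbr]; exact SimpleGraph.dist_eq_one_iff_adj.mp hdx) (by omega)
    have hrb : r ≠ b := by
      intro h; rw [← h] at hdbe; simp [SimpleGraph.dist_self] at hdbe; omega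
    refine ⟨a, b, Ne.symm hba, Or.inl hab, ?_⟩
    have hrs : r ∈ ({a, b} : Set V)ᶜ := by
      simp only [Set.mem_compl_iff, Set.mem_insert_iff, Set.mem_singleton_iff]
      push_neg; exact ⟨hra, hrb⟩
    apply induce_connected_of_walks H hrs
    intro v hv
    simp only [Set.mem_compl_iff, Set.mem_insert_iff, Set.mem_singleton_iff] at hv
    push_neg at hv
    obtain ⟨p, hplen⟩ := hc.exists_walk_length_eq_dist r v
    refine ⟨p, fun y hy => ?_⟩
    simp only [Set.mem_compl_iff, Set.mem_insert_iff, Set.mem_singleton_iff]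
    push_neg
    constructor
    · intro h
      by_cases hyv : y = v
      · exact hv.1 (hyv ▸ h)
      · have := shortest_support_lt H p hplen hy hyv
        rw [h] at this; have := hmax v; omega
    · intro h
      subst h
      -- y = b ∈ support of shortest walk to v
      have hsplit := p.take_spec hy
      have hlen : (p.takeUntil y hy).length + (p.dropUntil y hy).length = p.length := by
        conv_rhs => rw [← hsplit]
        rw [SimpleGraph.Walk.length_append]
      have h1 : H.dist r y ≤ (p.takeUntil y hy).length := SimpleGraph.dist_le _
      have h2 : (p.dropUntil y hy).length ≠ 0 := fun h0 => hv.2 ((SimpleGraph.Walk.eq_of_length_eq_zero (p := p.dropUntil y hy) h0).symm)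
      have hdv : H.dist r v ≤ d := hmax v
      have h3 : (p.dropUntil y hy).length = 1 := by omega
      have hadj : H.Adj y v := SimpleGraph.Walk.adj_of_length_eq_one h3
      have hdveq : H.dist r v = d := by omega
      exact hcase v hv.1 hadj hdveq

section helpers
variable {V : Type} [Fintype V] [DecidableEq V]

lemma card_compl_pair {a b : V} (h : a ≠ b) :
    Fintype.card ↥(({a, b} : Set V)ᶜ) = Fintype.card V - 2 := by
  rw [Fintype.card_compl_set]
  congr 1
  simp [Set.card_insert, h]

lemma three_le_card_of_distinct {x y u : V} (hxy : x ≠ y) (hxu : x ≠ u) (hyu : y ≠ u) :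
    3 ≤ Fintype.card V := by
  have h3 : ({x, y, u} : Finset V).card = 3 := by
    rw [Finset.card_insert_of_notMem (by
        simp only [Finset.mem_insert, Finset.mem_singleton]
        push_neg
        exact ⟨hxy, hxu⟩),
      Finset.card_insert_of_notMem (by
        simp only [Finset.mem_singleton]
        exact hyu)]
    simp
  have hle := Finset.card_le_card (Finset.subset_univ ({x, y, u} : Finset V))
  rw [Finset.card_univ, h3] at hle
  omega

lemma adj_of_card_two (H : SimpleGraph V) (hc : H.Connected)
    (h2 : Fintype.card V = 2) {x y : V} (hxy : x ≠ y) : H.Adj x y := by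
  obtain ⟨w⟩ := hc.preconnected x y
  cases w with
  | nil => exact absurd rfl hxy
  | cons h q =>
    rename_i u
    by_cases hu : u = y
    · exact hu ▸ h
    · exact absurd (three_le_card_of_distinct hxy h.ne (fun hh => hu hh.symm)) (by omega)

end helpers

lemma master_lemma (p : ℕ) :
    ∀ (V : Type) [Fintype V] [DecidableEq V] (H : SimpleGraph V), H.Connected →
    2 * p ≤ Fintype.card V →
    ∃ π : V → Fin (Fintype.card V - p),
      Surjective π ∧
      (∀ x y z : V, π x = π y → π y = π z → x = y ∨ y = z ∨ x = z) ∧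
      (∀ x y : V, x ≠ y → π x = π y → H.Adj x y ∨ ∃ c, H.Adj c x ∧ H.Adj c y) := by
  induction p with
  | zero =>
    intro V _ _ H hc hp
    refine ⟨fun v => Fintype.equivFin V v, fun q => ⟨(Fintype.equivFin V).symm q, by simp⟩,
      ?_, ?_⟩
    · intro x y z h1 h2
      exact Or.inl ((Fintype.equivFin V).injective h1)
    · intro x y hxy h
      exact absurd ((Fintype.equivFin V).injective h) hxy
  | succ p ih =>
    intro V _ _ H hc hp
    by_cases h3 : 3 ≤ Fintype.card V
    · obtain ⟨a, b, hab, hpairab, hconn⟩ := removal_lemma H hc h3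
      set s : Set V := {a, b}ᶜ with hs
      have hmem : ∀ v : V, v ∈ s ↔ ¬(v = a ∨ v = b) := by
        intro v; simp [hs]
      have hcard : Fintype.card ↥s = Fintype.card V - 2 := card_compl_pair hab
      have hps : 2 * p ≤ Fintype.card ↥s := by omega
      obtain ⟨π', hsurj', hfib', hpair'⟩ := ih ↥s (H.induce s) hconn hps
      have hK : (Fintype.card ↥s - p) + 1 = Fintype.card V - (p + 1) := by omega
      refine ⟨fun v => if h : v ∈ s then Fin.cast hK (Fin.castSucc (π' ⟨v, h⟩))
          else Fin.cast hK (Fin.last _), ?_, ?_, ?_⟩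
      · intro q
        rcases Fin.eq_castSucc_or_eq_last (Fin.cast hK.symm q) with ⟨j, hj⟩ | hj
        · obtain ⟨u, hu⟩ := hsurj' j
          refine ⟨↑u, ?_⟩
          simp only [dif_pos u.2, Subtype.coe_eta]
          rw [hu, ← hj]
          simp
        · refine ⟨a, ?_⟩
          have ha : a ∉ s := by simp [hmem]
          simp only [dif_neg ha]
          rw [← hj]
          simp
      · intro x y z h1 h2
        by_cases hx : x ∈ s <;> by_cases hy : y ∈ s <;> by_cases hz : z ∈ s <;>
          simp only [dif_pos hx, dif_pos hy, dif_pos hz, dif_neg hx, dif_neg hy, dif_neg hz]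
            at h1 h2
        · have e1 : π' ⟨x, hx⟩ = π' ⟨y, hy⟩ :=
            Fin.castSucc_injective _ ((Fin.cast_injective hK) h1)
          have e2 : π' ⟨y, hy⟩ = π' ⟨z, hz⟩ :=
            Fin.castSucc_injective _ ((Fin.cast_injective hK) h2)
          rcases hfib' _ _ _ e1 e2 with h | h | h
          · exact Or.inl (congrArg Subtype.val h)
          · exact Or.inr (Or.inl (congrArg Subtype.val h))
          · exact Or.inr (Or.inr (congrArg Subtype.val h))
        all_goals try exact absurd ((Fin.cast_injective hK) h1) (Fin.castSucc_lt_last _).ne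
        all_goals try exact absurd ((Fin.cast_injective hK) h2) (Fin.castSucc_lt_last _).ne
        all_goals try exact absurd ((Fin.cast_injective hK) h1).symm (Fin.castSucc_lt_last _).ne
        all_goals try exact absurd ((Fin.cast_injective hK) h2).symm (Fin.castSucc_lt_last _).ne
        · simp only [hmem, not_not] at hx hy hz
          rcases hx with rfl | rfl <;> rcases hy with rfl | rfl <;> rcases hz with rfl | rfl <;>
            tauto
      · intro x y hxy h
        by_cases hx : x ∈ s <;> by_cases hy : y ∈ s <;>
          simp only [dif_pos hx, dif_pos hy, dif_neg hx, dif_neg hy] at h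
        · have e1 : π' ⟨x, hx⟩ = π' ⟨y, hy⟩ :=
            Fin.castSucc_injective _ ((Fin.cast_injective hK) h)
          have hne : (⟨x, hx⟩ : ↥s) ≠ ⟨y, hy⟩ := fun hh => hxy (congrArg Subtype.val hh)
          rcases hpair' _ _ hne e1 with hadj | ⟨c, hc1, hc2⟩
          · exact Or.inl hadj
          · exact Or.inr ⟨↑c, hc1, hc2⟩
        · exact absurd ((Fin.cast_injective hK) h) (Fin.castSucc_lt_last _).ne
        · exact absurd ((Fin.cast_injective hK) h).symm (Fin.castSucc_lt_last _).ne
        · simp only [hmem, not_not] at hx hy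
          rcases hx with rfl | rfl <;> rcases hy with rfl | rfl
          · exact absurd rfl hxy
          · exact hpairab.imp id (fun ⟨c, h1, h2⟩ => ⟨c, h1, h2⟩)
          · refine (hpairab.imp (fun hh => hh.symm) (fun ⟨c, h1, h2⟩ => ⟨c, h2, h1⟩))
          · exact absurd rfl hxy
    · -- card V = 2
      push_neg at h3
      have h2' : Fintype.card V = 2 := by omega
      have hp0 : p = 0 := by omega
      subst hp0
      refine ⟨fun _ => ⟨0, by omega⟩, ?_, ?_, ?_⟩
      · intro q
        obtain ⟨v⟩ := (Fintype.card_pos_iff.mp (by omega) : Nonempty V)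
        refine ⟨v, ?_⟩
        have := q.2
        apply Fin.ext
        simp only
        omega
      · intro x y z _ _
        by_contra hno
        push_neg at hno
        exact absurd (three_le_card_of_distinct hno.1 hno.2.2 hno.2.1) (by omega)
      · intro x y hxy _
        exact Or.inl (adj_of_card_two H hc h2' hxy)

lemma step_lemma {V : Type} [Fintype V] [DecidableEq V] (H : SimpleGraph V)
    (hc : H.Connected) (p : ℕ) (hp : 2 * p ≤ Fintype.card V)
    (hK : 1 ≤ Fintype.card V - p) :
    ∃ G : SimpleGraph (Fin (Fintype.card V - p)), G.Connected ∧ IsUnpooling G H := by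
  obtain ⟨π, hsurj, hfib, hpr⟩ := master_lemma p V H hc hp
  classical
  set G : SimpleGraph (Fin (Fintype.card V - p)) :=
    { Adj := fun x y => x ≠ y ∧ ∃ u w : V, π u = x ∧ π w = y ∧ H.Adj u w
      symm := ⟨by
        rintro x y ⟨hne, u, w, hu, hw, huw⟩
        exact ⟨hne.symm, w, u, hw, hu, huw.symm⟩⟩
      loopless := ⟨fun x h => h.1 rfl⟩ } with hG
  have hGadj : ∀ x y, G.Adj x y ↔ (x ≠ y ∧ ∃ u w : V, π u = x ∧ π w = y ∧ H.Adj u w) := by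
    intro x y; rw [hG]
  have hreach : ∀ u w : V, H.Reachable u w → G.Reachable (π u) (π w) := by
    intro u w ⟨walk⟩
    induction walk with
    | nil => exact SimpleGraph.Reachable.refl _
    | cons h q ihq =>
      rename_i x y z
      by_cases hxy : π x = π y
      · rwa [hxy]
      · exact (SimpleGraph.Adj.reachable ((hGadj _ _).mpr
          ⟨hxy, x, y, rfl, rfl, h⟩)).trans ihq
  have hGconn : G.Connected := by
    have : Nonempty (Fin (Fintype.card V - p)) := ⟨⟨0, by omega⟩⟩
    refine ⟨fun x y => ?_⟩
    obtain ⟨u, rfl⟩ := hsurj x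
    obtain ⟨w, rfl⟩ := hsurj y
    exact hreach u w (hc.preconnected u w)
  refine ⟨G, hGconn, π, {v | ∃ x y : V, x ≠ y ∧ π x = v ∧ π y = v}, ?_, ?_, ?_, ?_, ?_⟩
  · rintro v ⟨x, y, hxy, hx, hy⟩
    refine ⟨x, y, hxy, hx, hy, fun c hcv => ?_⟩
    rcases hfib x y c (hx.trans hy.symm) (hy.trans hcv.symm) with h | h | h
    · exact absurd h hxy
    · exact Or.inr h.symm
    · exact Or.inl h.symm
  · intro v hv
    obtain ⟨x, hx⟩ := hsurj v
    refine ⟨x, hx, fun y hy => ?_⟩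
    by_contra hne
    exact hv ⟨y, x, hne, hy, hx⟩
  · intro a b hadj
    by_cases h : π a = π b
    · exact Or.inl h
    · exact Or.inr ((hGadj _ _).mpr ⟨h, a, b, rfl, rfl, hadj⟩)
  · rintro v ⟨x, y, hxy, hx, hy⟩ a b hab ha hb
    rcases hpr a b hab (ha.trans hb.symm) with h | ⟨c, hc1, hc2⟩
    · exact Or.inl h
    · have hca : c ≠ a := fun h => H.irrefl (h ▸ hc1)
      have hcb : c ≠ b := fun h => H.irrefl (h ▸ hc2)
      have hcv : π c ≠ v := by
        intro hcv
        rcases hfib a b c (ha.trans hb.symm) (hb.trans hcv.symm) with h | h | h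
        · exact hab h
        · exact hcb h.symm
        · exact hca h.symm
      exact Or.inr ⟨π c, (hGadj _ _).mpr ⟨fun h => hcv h.symm, a, c, ha, rfl, hc1.symm⟩,
        c, rfl, hc1, hc2⟩
  · intro i j hadj
    rw [hGadj] at hadj
    obtain ⟨hne, u, w, hu, hw, huw⟩ := hadj
    exact ⟨u, w, hu, hw, huw⟩

lemma IsUnpooling.congr {α β α' β' : Type} {G : SimpleGraph α} {G' : SimpleGraph β}
    {G₁ : SimpleGraph α'} {G₁' : SimpleGraph β'} (eG : G ≃g G₁) (eH : G' ≃g G₁')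
    (h : IsUnpooling G G') : IsUnpooling G₁ G₁' := by
  obtain ⟨π, Iu, h1, h2, h3, h4, h5⟩ := h
  refine ⟨fun b => eG (π (eH.symm b)), (⇑eG) '' Iu, ?_, ?_, ?_, ?_, ?_⟩
  · rintro v ⟨v₀, hv₀, rfl⟩
    obtain ⟨a, b, hab, ha, hb, hcov⟩ := h1 v₀ hv₀
    refine ⟨eH a, eH b, fun hh => hab (eH.toEquiv.injective hh), by simp [ha], by simp [hb],
      fun c hc => ?_⟩
    have : π (eH.symm c) = v₀ := eG.toEquiv.injective hc
    rcases hcov _ this with h | h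
    · exact Or.inl (by rw [← h]; simp)
    · exact Or.inr (by rw [← h]; simp)
  · intro v hv
    have hv₀ : eG.symm v ∉ Iu := fun hh => hv ⟨eG.symm v, hh, by simp⟩
    obtain ⟨a, ha, hu⟩ := h2 _ hv₀
    refine ⟨eH a, by simp [ha], fun c hc => ?_⟩
    have : π (eH.symm c) = eG.symm v := by
      have := congrArg (⇑eG.symm) hc
      simpa using this
    rw [← hu _ this]
    simp
  · intro a b hadj
    have hadj' : G'.Adj (eH.symm a) (eH.symm b) := eH.symm.map_adj_iff.mpr hadj
    rcases h3 _ _ hadj' with h | h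
    · exact Or.inl (congrArg (⇑eG) h)
    · exact Or.inr (eG.map_adj_iff.mpr h)
  · rintro v ⟨v₀, hv₀, rfl⟩ a b hab ha hb
    have ha' : π (eH.symm a) = v₀ := eG.toEquiv.injective ha
    have hb' : π (eH.symm b) = v₀ := eG.toEquiv.injective hb
    have hab' : eH.symm a ≠ eH.symm b := fun hh => hab (eH.symm.toEquiv.injective hh)
    rcases h4 v₀ hv₀ _ _ hab' ha' hb' with h | ⟨u, hu, c, hcu, hca, hcb⟩
    · exact Or.inl (by
        have h2 := eH.map_adj_iff.mpr h
        simpa using h2)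
    · refine Or.inr ⟨eG u, eG.map_adj_iff.mpr hu, eH c, by simp [hcu], ?_, ?_⟩
      · have h2 := eH.map_adj_iff.mpr hca
        simpa using h2
      · have h2 := eH.map_adj_iff.mpr hcb
        simpa using h2
  · intro i j hadj
    have hadj' : G.Adj (eG.symm i) (eG.symm j) := eG.symm.map_adj_iff.mpr hadj
    obtain ⟨a, b, ha, hb, hab⟩ := h5 _ _ hadj'
    exact ⟨eH a, eH b, by simp [ha], by simp [hb], eH.map_adj_iff.mpr hab⟩

/-- pull back a graph along `Fin.cast`. -/
def castIso {k l : ℕ} (h : k = l) (Gr : SimpleGraph (Fin l)) :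
    (Gr.comap (Fin.cast h)) ≃g Gr := ⟨finCongr h, Iff.rfl⟩

lemma chain_lemma (L : ℕ) :
    ∀ (V : Type) [Fintype V] [DecidableEq V] (H : SimpleGraph V),
    H.Connected → 3 ≤ Fintype.card V → Fintype.card V ≤ 3 * 2 ^ L →
    ∃ (n : ℕ → ℕ) (Gs : ∀ i : ℕ, SimpleGraph (Fin (n i))),
      n 0 = 3 ∧ (Gs 0).Connected ∧ (∀ i < L, IsUnpooling (Gs i) (Gs (i + 1))) ∧
      Nonempty (Gs L ≃g H) := by
  induction L with
  | zero =>
    intro V _ _ H hc h3 hle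
    have hcard : Fintype.card V = 3 := by simpa using le_antisymm hle h3
    have e : Fin 3 ≃ V := Fintype.equivOfCardEq (by simp [hcard])
    have iso : (H.comap ⇑e) ≃g H := ⟨e, Iff.rfl⟩
    exact ⟨fun _ => 3, fun _ => H.comap ⇑e, rfl, iso.connected_iff.mpr hc,
      fun i hi => absurd hi (Nat.not_lt_zero i), ⟨iso⟩⟩
  | succ L ih =>
    intro V _ _ H hc h3 hle
    set m := Fintype.card V with hm
    set p := m - max 3 ((m + 1) / 2) with hpdef
    have hmax : max 3 ((m + 1) / 2) ≤ m := by
      rcases le_or_gt ((m+1)/2) 3 with h | h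
      · simp only [max_eq_left h]; omega
      · have : (m+1)/2 ≤ m := by omega
        omega
    have hp : 2 * p ≤ m := by
      have h1 : (m + 1) / 2 ≤ max 3 ((m + 1) / 2) := le_max_right _ _
      omega
    have hK1 : 1 ≤ m - p := by omega
    obtain ⟨G, hGc, hUp⟩ := step_lemma H hc p hp hK1
    have hK3 : 3 ≤ m - p := by
      have h1 : 3 ≤ max 3 ((m + 1) / 2) := le_max_left _ _
      omega
    have hKle : m - p ≤ 3 * 2 ^ L := by
      have h2 : 2 ^ (L + 1) = 2 ^ L * 2 := pow_succ 2 L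
      have h1 : (m + 1) / 2 ≤ 3 * 2 ^ L := by omega
      have h0 : (3:ℕ) ≤ 3 * 2 ^ L := by
        have := Nat.one_le_two_pow (n := L)
        omega
      have : m - p = max 3 ((m + 1) / 2) := by omega
      rw [this]
      exact max_le h0 h1
    obtain ⟨n, Gs, hn0, hGs0, hstep, ⟨endIso⟩⟩ :=
      ih (Fin (m - p)) G hGc (by simpa using hK3) (by simpa using hKle)
    have eV : Fin m ≃ V := (Fintype.equivFin V).symm
    refine ⟨fun i => if i ≤ L then n i else m,
      fun i => if h : i ≤ L then (Gs i).comap (Fin.cast (if_pos h))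
        else H.comap (fun x => eV (Fin.cast (if_neg h) x)), ?_, ?_, ?_, ?_⟩
    · beta_reduce
      rw [if_pos (Nat.zero_le L), hn0]
    · beta_reduce
      rw [dif_pos (Nat.zero_le L)]
      exact (castIso _ (Gs 0)).connected_iff.mpr hGs0
    · intro i hi
      beta_reduce
      by_cases hiL : i + 1 ≤ L
      · have hi' : i ≤ L := by omega
        rw [dif_pos hi', dif_pos hiL]
        exact IsUnpooling.congr (castIso (if_pos hi') (Gs i)).symm
          (castIso (if_pos hiL) (Gs (i+1))).symm (hstep i (by omega))
      · have hiL' : i = L := by omega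
        subst hiL'
        rw [dif_pos (le_refl i), dif_neg (by omega : ¬ i + 1 ≤ i)]
        have hcast : (if i + 1 ≤ i then n (i+1) else m) = m := if_neg (by omega)
        have isoH : (H.comap (fun x => eV (Fin.cast hcast x))) ≃g H :=
          ⟨(finCongr hcast).trans eV, Iff.rfl⟩
        exact IsUnpooling.congr ((castIso (if_pos (le_refl i)) (Gs i)).trans endIso).symm
          isoH.symm hUp
    · beta_reduce
      rw [dif_neg (by omega : ¬ L + 1 ≤ L)]
      have hcast : (if L + 1 ≤ L then n (L+1) else m) = m := if_neg (by omega)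
      exact ⟨⟨(finCongr hcast).trans eV, Iff.rfl⟩⟩


end UnpoolingProof

/-- Any connected graph with `N ≥ 3` vertices is obtained from some connected 3-vertex
graph by a sequence of `⌈log₂(N/3)⌉` unpooling operations. -/
theorem exists_unpooling_sequence {V : Type} [Fintype V] (Go : SimpleGraph V)
    (hc : Go.Connected) (N : ℕ) (hN : Fintype.card V = N) (h3 : 3 ≤ N) :
    ∃ (n : ℕ → ℕ) (Gs : ∀ i : ℕ, SimpleGraph (Fin (n i))),
      n 0 = 3 ∧ (Gs 0).Connected ∧
      (∀ i < Nat.clog 2 ((N + 2) / 3), IsUnpooling (Gs i) (Gs (i + 1))) ∧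
      Nonempty (Gs (Nat.clog 2 ((N + 2) / 3)) ≃g Go) := by
  classical
  have h1 : (N + 2) / 3 ≤ 2 ^ Nat.clog 2 ((N + 2) / 3) :=
    Nat.le_pow_clog (by norm_num) _
  have hle : Fintype.card V ≤ 3 * 2 ^ Nat.clog 2 ((N + 2) / 3) := by
    rw [hN]
    omega
  exact chain_lemma _ V Go hc (by omega) hle
end

section
/- Let G be a connected finite simple graph with 2K vertices. If G has a vertex j of degree 1 with neighbor k and the induced subgraph on V \ {j, k} is connected, and the lemma on distance-≤2 perfect pairings holds for connected graphs on 2K−2 vertices, then G admits a perfect distance-≤2 pairing of all 2K vertices that includes the pair (j, k). -/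
/-- Induction step (Case 1, connected remainder): if `j` has degree 1 with neighbor `k`,
removing `{j, k}` leaves a connected graph, and every connected graph on `2K - 2`
vertices has a perfect distance-≤2 pairing, then `G` has a perfect distance-≤2 pairing
containing the pair `(j, k)`. -/
theorem pairing_step_with_leaf {V : Type} [Fintype V] (G : SimpleGraph V)
    [DecidableRel G.Adj] (K : ℕ) (hcard : Fintype.card V = 2 * K) (hc : G.Connected)
    (j k : V) (hdeg : G.degree j = 1) (hjk : G.Adj j k)
    (hrem : (G.induce {v | v ≠ j ∧ v ≠ k}).Connected)
    (IH : ∀ (V2 : Type) [Fintype V2] (H : SimpleGraph V2),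
      Fintype.card V2 = 2 * K - 2 → H.Connected →
      ∃ f : V2 → V2, Function.Involutive f ∧ ∀ v, f v ≠ v ∧ H.dist v (f v) ≤ 2) :
    ∃ f : V → V, Function.Involutive f ∧
      (∀ v, f v ≠ v ∧ G.dist v (f v) ≤ 2) ∧ f j = k := by
  classical
  have hjkne : j ≠ k := hjk.ne
  set s : Set V := {v | v ≠ j ∧ v ≠ k} with hs
  have hset : s = ({j, k} : Set V)ᶜ := by
    ext v; simp [hs, not_or]
  have hcards : Fintype.card s = 2 * K - 2 := by
    have h2 : Fintype.card ({j, k} : Set V) = 2 := by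
      rw [Fintype.card_eq_nat_card, Nat.card_coe_set_eq, Set.ncard_pair hjkne]
    rw [Fintype.card_congr (Equiv.setCongr hset), Fintype.card_compl_set, h2, hcard]
  obtain ⟨f2, hf2inv, hf2⟩ := IH s (G.induce s) hcards hrem
  -- distance in the induced subgraph dominates distance in G
  have key : ∀ x y : s, G.dist (x : V) (y : V) ≤ (G.induce s).dist x y := by
    intro x y
    obtain ⟨p, hp⟩ := hrem.exists_walk_length_eq_dist x y
    calc G.dist (x : V) (y : V)
        ≤ (p.map (SimpleGraph.Embedding.induce s).toHom).length :=
          SimpleGraph.dist_le _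
      _ = p.length := SimpleGraph.Walk.length_map _ _
      _ = (G.induce s).dist x y := hp
  -- define the pairing
  refine ⟨fun v => if h : v ≠ j ∧ v ≠ k then (f2 ⟨v, h⟩ : V)
    else if v = j then k else j, ?_, ?_, ?_⟩
  · intro v
    beta_reduce
    by_cases h : v ≠ j ∧ v ≠ k
    · have hmem : (f2 ⟨v, h⟩ : V) ≠ j ∧ (f2 ⟨v, h⟩ : V) ≠ k := (f2 ⟨v, h⟩).2
      simp only [dif_pos h, dif_pos hmem]
      have : f2 ⟨(f2 ⟨v, h⟩ : V), hmem⟩ = ⟨v, h⟩ := by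
        have := hf2inv ⟨v, h⟩
        convert this using 2
      rw [this]
    · push_neg at h
      by_cases hv : v = j
      · subst hv
        rw [dif_neg (show ¬(v ≠ v ∧ v ≠ k) from fun hh => hh.1 rfl), if_pos rfl,
          dif_neg (show ¬(k ≠ v ∧ k ≠ k) from fun hh => hh.2 rfl), if_neg hjkne.symm]
      · have hvk : v = k := h hv
        subst hvk
        rw [dif_neg (show ¬(v ≠ j ∧ v ≠ v) from fun hh => hh.2 rfl), if_neg hjkne.symm,
          dif_neg (show ¬(j ≠ j ∧ j ≠ v) from fun hh => hh.1 rfl), if_pos rfl]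
  · intro v
    beta_reduce
    by_cases h : v ≠ j ∧ v ≠ k
    · simp only [dif_pos h]
      constructor
      · intro heq
        apply (hf2 ⟨v, h⟩).1
        exact Subtype.ext heq
      · exact le_trans (key ⟨v, h⟩ (f2 ⟨v, h⟩)) (hf2 ⟨v, h⟩).2
    · push_neg at h
      by_cases hv : v = j
      · subst hv
        rw [dif_neg (show ¬(v ≠ v ∧ v ≠ k) from fun hh => hh.1 rfl), if_pos rfl]
        exact ⟨hjkne.symm, by
          rw [SimpleGraph.dist_eq_one_iff_adj.mpr hjk]; norm_num⟩
      · have hvk : v = k := h hv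
        subst hvk
        rw [dif_neg (show ¬(v ≠ j ∧ v ≠ v) from fun hh => hh.2 rfl), if_neg hjkne.symm]
        exact ⟨hjkne, by
          rw [SimpleGraph.dist_eq_one_iff_adj.mpr hjk.symm]; norm_num⟩
  · simp
end
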